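/- Let φ(x) = (1 + x²)/2 on [0,1], and for A > 0 let F_A(t) = exp(A(t − 1)). Then for every n ≥ 2, the n-th derivative of F_A ∘ φ at x = 1 satisfies (F_A ∘ φ)^{(n)}(1) ≥ binomial(n,2) · A^{n−1}. -/

import Mathlib

open Polynomial

noncomputable def fdbP (A : ℝ) : ℕ → Polynomial ℝ
  | 0 => 1
  | (n+1) => fdbP A n * (Polynomial.C A * Polynomial.X) + Polynomial.derivative (fdbP A n)

lemma fdb_g_hasDerivAt (A x : ℝ) :
    HasDerivAt (fun x : ℝ => Real.exp (A * ((1 + x ^ 2) / 2 - 1)))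
      (A * x * Real.exp (A * ((1 + x ^ 2) / 2 - 1))) x := by
  have h1 : HasDerivAt (fun x : ℝ => A * ((1 + x ^ 2) / 2 - 1)) (A * x) x := by
    have := ((((hasDerivAt_pow 2 x).const_add 1).div_const 2).sub_const 1).const_mul A
    exact this.congr_deriv (by ring)
  have := h1.exp
  convert this using 1
  ring

lemma fdb_iter (A : ℝ) (n : ℕ) (x : ℝ) :
    iteratedDeriv n (fun x : ℝ => Real.exp (A * ((1 + x ^ 2) / 2 - 1))) x
      = (fdbP A n).eval x * Real.exp (A * ((1 + x ^ 2) / 2 - 1)) := by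
  induction n generalizing x with
  | zero => simp [fdbP]
  | succ n ih =>
    rw [iteratedDeriv_succ]
    have hfun : iteratedDeriv n (fun x : ℝ => Real.exp (A * ((1 + x ^ 2) / 2 - 1)))
        = fun x => (fdbP A n).eval x * Real.exp (A * ((1 + x ^ 2) / 2 - 1)) :=
      funext ih
    rw [hfun]
    have hd : HasDerivAt (fun x => (fdbP A n).eval x * Real.exp (A * ((1 + x ^ 2) / 2 - 1)))
        ((Polynomial.derivative (fdbP A n)).eval x * Real.exp (A * ((1 + x ^ 2) / 2 - 1))
          + (fdbP A n).eval x * (A * x * Real.exp (A * ((1 + x ^ 2) / 2 - 1)))) x :=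
      ((fdbP A n).hasDerivAt x).mul (fdb_g_hasDerivAt A x)
    rw [hd.deriv]
    simp [fdbP]
    ring

lemma fdb_coeff_nonneg (A : ℝ) (hA : 0 ≤ A) (n : ℕ) (i : ℕ) : 0 ≤ (fdbP A n).coeff i := by
  induction n generalizing i with
  | zero =>
    simp [fdbP, Polynomial.coeff_one]
    positivity
  | succ n ih =>
    simp only [fdbP, Polynomial.coeff_add, Polynomial.coeff_derivative]
    have h1 : 0 ≤ (fdbP A n * (Polynomial.C A * Polynomial.X)).coeff i := by
      have : fdbP A n * (Polynomial.C A * Polynomial.X)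
          = Polynomial.C A * (fdbP A n * Polynomial.X) := by ring
      rw [this, Polynomial.coeff_C_mul]
      match i with
      | 0 => simp
      | (j+1) =>
        rw [Polynomial.coeff_mul_X]
        exact mul_nonneg hA (ih j)
    have h2 : (0:ℝ) ≤ (fdbP A n).coeff (i+1) * ((i:ℝ) + 1) :=
      mul_nonneg (ih (i+1)) (by positivity)
    linarith

lemma fdb_eval_nonneg (A : ℝ) (hA : 0 ≤ A) (p : Polynomial ℝ)
    (hp : ∀ i, 0 ≤ p.coeff i) : 0 ≤ p.eval 1 := by
  rw [Polynomial.eval_eq_sum_range]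
  exact Finset.sum_nonneg fun i _ => by simpa using hp i

lemma fdb_bounds (A : ℝ) (hA : 0 < A) (n : ℕ) :
    A ^ n ≤ (fdbP A n).eval 1
    ∧ ((n.choose 2 : ℕ) : ℝ) * A ^ (n - 1) ≤ (fdbP A n).eval 1
    ∧ (n : ℝ) * A ^ n ≤ (Polynomial.derivative (fdbP A n)).eval 1 := by
  induction n with
  | zero => simp [fdbP]
  | succ n ih =>
    obtain ⟨h1, h2, h3⟩ := ih
    have hb : (fdbP A (n+1)).eval 1
        = (fdbP A n).eval 1 * A + (Polynomial.derivative (fdbP A n)).eval 1 := by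
      simp [fdbP]
    have hdd : 0 ≤ (Polynomial.derivative (Polynomial.derivative (fdbP A n))).eval 1 := by
      apply fdb_eval_nonneg A hA.le
      intro i
      rw [Polynomial.coeff_derivative, Polynomial.coeff_derivative]
      have := fdb_coeff_nonneg A hA.le n (i+1+1)
      positivity
    have hc : A * (Polynomial.derivative (fdbP A n)).eval 1 + A * (fdbP A n).eval 1
        ≤ (Polynomial.derivative (fdbP A (n+1))).eval 1 := by
      simp only [fdbP, map_add, Polynomial.derivative_mul, Polynomial.derivative_C,
        Polynomial.derivative_X, Polynomial.eval_add, Polynomial.eval_mul,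
        Polynomial.eval_C, Polynomial.eval_X, Polynomial.eval_one, Polynomial.eval_zero]
      nlinarith [hdd]
    have hApow : 0 < A ^ n := pow_pos hA n
    have hAn : (0:ℝ) ≤ (n : ℝ) * A ^ n := by positivity
    refine ⟨?_, ?_, ?_⟩
    · rw [hb, pow_succ]
      nlinarith
    · rw [hb]
      have hch : ((n+1).choose 2 : ℕ) = n.choose 1 + n.choose 2 := Nat.choose_succ_succ n 1
      rw [hch]
      simp only [Nat.choose_one_right]
      push_cast
      rcases Nat.eq_zero_or_pos n with h0 | hpos
      · subst h0; simp [fdbP]; nlinarith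
      · have : A ^ (n - 1) * A = A ^ n := by
          rw [← pow_succ, Nat.sub_add_cancel hpos]
        nlinarith [mul_le_mul_of_nonneg_right h2 hA.le]
    · push_cast
      calc ((n:ℝ)+1) * A ^ (n+1) = A * ((n:ℝ) * A ^ n) + A * A ^ n := by ring
        _ ≤ A * (Polynomial.derivative (fdbP A n)).eval 1 + A * (fdbP A n).eval 1 := by
            have := mul_le_mul_of_nonneg_left h3 hA.le
            have := mul_le_mul_of_nonneg_left h1 hA.le
            push_cast
            linarith
        _ ≤ _ := hc

theorem faa_di_bruno_lower_bound
    (A : ℝ) (hA : 0 < A) (n : ℕ) (hn : 2 ≤ n) :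
    ((n.choose 2 : ℕ) : ℝ) * A ^ (n - 1) ≤
      iteratedDeriv n (fun x : ℝ => Real.exp (A * ((1 + x ^ 2) / 2 - 1))) 1 := by
  rw [fdb_iter]
  have : A * ((1 + (1:ℝ) ^ 2) / 2 - 1) = 0 := by ring
  rw [this, Real.exp_zero, mul_one]
  exact (fdb_bounds A hA n).2.1
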